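/- Define g : [0, π) → [0, π) by g(z) = arccos( ((π − z) cos z + sin z)/π ), let g^l be the l-fold iterate of g (g^0 = identity), and for an integer L ≥ 0 define F_L : [0, π) → ℝ by F_L(θ) = (1/(L+1)) Σ_{l=0}^{L} [ cos(g^l(θ)) · Π_{l'=l}^{L−1} (1 − g^{l'}(θ)/π) ] (empty product equal to 1). Then for every fixed L, as θ → 0 from the right, F_L(θ) = (1 − (L/(2π)) θ + o(θ)) · cos θ; that is, θ ↦ F_L(θ) − (1 − (L/(2π))θ) cos θ is o(θ) as θ → 0⁺. -/

import Mathlib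

open Asymptotics

/-- The layer-to-layer embedding-angle map of an infinitely wide ReLU network:
`g z = arccos(((π − z) cos z + sin z)/π)`. -/
noncomputable def g (z : ℝ) : ℝ :=
  Real.arccos (((Real.pi - z) * Real.cos z + Real.sin z) / Real.pi)

/-- The cosine of the model-gradient angle of an infinitely wide depth-`L` ReLU network
(Theorem 4.3 of the paper):
`F L θ = (1/(L+1)) ∑_{l=0}^{L} cos (g^[l] θ) ∏_{l'=l}^{L−1} (1 − g^[l'] θ / π)`,
with the empty product equal to `1`. -/
noncomputable def F (L : ℕ) (θ : ℝ) : ℝ :=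
  (1 / ((L : ℝ) + 1)) * ∑ l ∈ Finset.range (L + 1),
    Real.cos (g^[l] θ) * ∏ l' ∈ Finset.Ico l L, (1 - g^[l'] θ / Real.pi)

lemma arccos_antitone : Antitone Real.arccos := fun x y h => by
  simp only [Real.arccos_eq_pi_div_two_sub_arcsin]
  linarith [Real.monotone_arcsin h]

lemma sin_gt_mul_cos {z : ℝ} (hz : 0 < z) (hz1 : z ≤ 1) : z * Real.cos z < Real.sin z := by
  have h1 := Real.sin_gt_sub_cube (by linarith : (0:ℝ) < z/2)
  have h2 := Real.sin_gt_sub_cube hz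
  have h3 : Real.sin (z/2) ≤ z/2 := Real.sin_le (by linarith)
  have h4 : Real.cos z = 1 - 2 * Real.sin (z/2)^2 := by
    have hc := Real.cos_two_mul (z/2)
    have hs := Real.sin_sq_add_cos_sq (z/2)
    have h2z : (2:ℝ) * (z/2) = z := by ring
    rw [h2z] at hc
    nlinarith
  have hz3 : z^3 ≤ z := by nlinarith [mul_nonneg (mul_nonneg hz.le hz.le) (by linarith : (0:ℝ) ≤ 1 - z), mul_nonneg hz.le (by linarith : (0:ℝ) ≤ 1 - z)]
  have hz5 : z^5 ≤ z^3 := by nlinarith [mul_nonneg (mul_nonneg (mul_nonneg hz.le hz.le) hz.le) (mul_nonneg hz.le (by linarith : (0:ℝ) ≤ 1 - z)), mul_nonneg (mul_nonneg (mul_nonneg hz.le hz.le) (mul_nonneg hz.le hz.le)) (by linarith : (0:ℝ) ≤ 1 - z)]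
  have ht0 : 0 < z/2 - z^3/32 := by nlinarith
  have hspos : 0 < Real.sin (z/2) := by nlinarith
  have hss : (z/2 - z^3/32)^2 ≤ Real.sin (z/2)^2 := by nlinarith
  have hkey : 2*z*(z/2 - z^3/32)^2 ≤ 2*z*Real.sin (z/2)^2 :=
    mul_le_mul_of_nonneg_left hss (by linarith)
  have hz7 : z^7 ≤ z^5 := by nlinarith [mul_nonneg (mul_nonneg (mul_nonneg (mul_nonneg hz.le hz.le) (mul_nonneg hz.le hz.le)) (mul_nonneg hz.le hz.le)) (by linarith : (0:ℝ) ≤ 1 - z)]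
  have hz70 : (0:ℝ) ≤ z^7 := by positivity
  nlinarith [hkey, h2, hz70, hz5]

lemma g_sandwich {ε z : ℝ} (hε0 : 0 < ε) (hε : ε ≤ 1/2) (hz : 0 < z)
    (hz1 : z ≤ 1) (hz2 : z ≤ 2*ε) : (1-ε)*z ≤ g z ∧ g z ≤ z := by
  have hπ := Real.pi_gt_three
  have hπ0 : (0:ℝ) < Real.pi := by linarith
  have hsc := sin_gt_mul_cos hz hz1
  have hεz : 0 ≤ ε * z := mul_nonneg hε0.le hz.le
  have hge : Real.cos z ≤ ((Real.pi - z) * Real.cos z + Real.sin z) / Real.pi := by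
    rw [le_div_iff₀ hπ0]; nlinarith
  constructor
  · have key : ((Real.pi - z) * Real.cos z + Real.sin z) / Real.pi ≤ Real.cos ((1-ε)*z) := by
      rw [div_le_iff₀ hπ0]
      have hid : Real.cos ((1-ε)*z) - Real.cos z
          = 2 * Real.sin ((1-ε/2)*z) * Real.sin (ε*z/2) := by
        rw [Real.cos_sub_cos]
        have e1 : ((1-ε)*z + z)/2 = (1-ε/2)*z := by ring
        have e2 : ((1-ε)*z - z)/2 = -(ε*z/2) := by ring
        rw [e1, e2, Real.sin_neg]; ring
      set a : ℝ := (1-ε/2)*z with hadef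
      set b : ℝ := ε*z/2 with hbdef
      have ha0 : 0 < a := mul_pos (by linarith) hz
      have ha1 : a ≤ 1 := by
        have : (1-ε/2) * z ≤ 1 * z := mul_le_mul_of_nonneg_right (by linarith) hz.le
        rw [hadef]; linarith
      have hb0 : 0 < b := div_pos (mul_pos hε0 hz) two_pos
      have hb1 : b ≤ 1 := by
        have : ε * z ≤ (1/2) * 1 := mul_le_mul hε hz1 hz.le (by norm_num)
        rw [hbdef]; linarith
      have hb1' := Real.sin_gt_sub_cube ha0
      have hb2' := Real.sin_gt_sub_cube hb0
      have ha3 : a^3 ≤ a := by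
        calc a^3 ≤ a^1 := pow_le_pow_of_le_one ha0.le ha1 (by norm_num)
        _ = a := pow_one a
      have hb3 : b^3 ≤ b := by
        calc b^3 ≤ b^1 := pow_le_pow_of_le_one hb0.le hb1 (by norm_num)
        _ = b := pow_one b
      have halb : (3:ℝ)/4 * z ≤ a := by
        have := mul_le_mul_of_nonneg_right (show (3:ℝ)/4 ≤ 1-ε/2 by linarith) hz.le
        rw [hadef]; linarith
      have hs1 : (9:ℝ)/16 * z ≤ Real.sin a := by linarith
      have hs2 : (3:ℝ)/8 * (ε*z) ≤ Real.sin b := by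
        have hbeq : ε*z = 2*b := by rw [hbdef]; ring
        rw [hbeq]; linarith
      have hsa : 0 ≤ Real.sin a := le_trans (by positivity) hs1
      have hsb : 0 ≤ Real.sin b := le_trans (by positivity) hs2
      have hprod : (9:ℝ)/16*z * ((3:ℝ)/8*(ε*z)) ≤ Real.sin a * Real.sin b :=
        mul_le_mul hs1 hs2 (by positivity) hsa
      have hX : (0:ℝ) ≤ 2 * Real.sin a * Real.sin b :=
        mul_nonneg (mul_nonneg (by norm_num) hsa) hsb
      have hpi3 : 0 ≤ (Real.pi - 3) * (2 * Real.sin a * Real.sin b) :=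
        mul_nonneg (by linarith) hX
      have hsinle : Real.sin z ≤ z := Real.sin_le hz.le
      have hcoslb : 1 - z^2/2 ≤ Real.cos z := Real.one_sub_sq_div_two_le_cos
      have hzcos : z * (1 - z^2/2) ≤ z * Real.cos z :=
        mul_le_mul_of_nonneg_left hcoslb hz.le
      have hz32 : z * z^2 ≤ 2*ε*z^2 :=
        mul_le_mul_of_nonneg_right hz2 (sq_nonneg z)
      have hid' : Real.pi * (Real.cos ((1-ε)*z) - Real.cos z)
          = Real.pi * (2 * Real.sin a * Real.sin b) := by rw [hid]
      have hεz2 : 0 ≤ ε * (z*z) := mul_nonneg hε0.le (mul_nonneg hz.le hz.le)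
      linarith [hid', hprod, hpi3, hzcos, hsinle, hz32, hεz2]
    have h1 := arccos_antitone key
    have hup : (1-ε)*z ≤ z := by linarith
    rw [Real.arccos_cos (mul_nonneg (by linarith) hz.le) (by linarith)] at h1
    exact h1
  · have h2 := arccos_antitone hge
    rw [Real.arccos_cos hz.le (by linarith)] at h2
    exact h2

lemma g_iter_sandwich {ε : ℝ} (hε0 : 0 < ε) (hε : ε ≤ 1/2) (l : ℕ) :
    ∀ z, 0 < z → z ≤ 1 → z ≤ 2*ε → (1-ε)^l * z ≤ g^[l] z ∧ g^[l] z ≤ z := by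
  induction l with
  | zero => intro z hz _ _; simpa using le_refl z
  | succ n ih =>
    intro z hz hz1 hz2
    obtain ⟨hl, hu⟩ := g_sandwich hε0 hε hz hz1 hz2
    have hgpos : 0 < g z := lt_of_lt_of_le (by nlinarith) hl
    obtain ⟨ihl, ihu⟩ := ih (g z) hgpos (hu.trans hz1) (hu.trans hz2)
    rw [Function.iterate_succ_apply]
    refine ⟨?_, ihu.trans hu⟩
    calc (1-ε)^(n+1) * z = (1-ε)^n * ((1-ε)*z) := by ring
      _ ≤ (1-ε)^n * g z :=
          mul_le_mul_of_nonneg_left hl (pow_nonneg (by linarith) n)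
      _ ≤ g^[n] (g z) := ihl

lemma g_iter_pos_le (l : ℕ) {θ : ℝ} (h0 : 0 < θ) (h1 : θ ≤ 1) :
    0 < g^[l] θ ∧ g^[l] θ ≤ θ := by
  have h := g_iter_sandwich (ε := 1/2) (by norm_num) le_rfl l θ h0 h1 (by linarith)
  exact ⟨lt_of_lt_of_le (by positivity) h.1, h.2⟩

lemma g_iter_littleo (l : ℕ) :
    (fun z : ℝ => g^[l] z - z) =o[nhdsWithin 0 (Set.Ioi 0)] fun z : ℝ => z := by
  rw [isLittleO_iff]
  intro c hc
  have hl1 : (0:ℝ) < l + 1 := by positivity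
  set ε : ℝ := min (1/2) (c / (l+1)) with hεdef
  have hε0 : 0 < ε := lt_min (by norm_num) (div_pos hc hl1)
  have hε2 : ε ≤ 1/2 := min_le_left _ _
  filter_upwards [Ioo_mem_nhdsGT
    (show (0:ℝ) < min 1 (2*ε) from lt_min one_pos (by linarith))] with z hzmem
  obtain ⟨hz0, hzlt⟩ := hzmem
  have hz1 : z ≤ 1 := (hzlt.trans_le (min_le_left _ _)).le
  have hz2 : z ≤ 2*ε := (hzlt.trans_le (min_le_right _ _)).le
  obtain ⟨hlo, hhi⟩ := g_iter_sandwich hε0 hε2 l z hz0 hz1 hz2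
  have hbern : (1:ℝ) - l*ε ≤ (1-ε)^l := by
    have h := one_add_mul_le_pow (show (-2:ℝ) ≤ -ε by linarith) l
    have he : (1:ℝ) + -ε = 1 - ε := by ring
    rw [he] at h
    linarith
  have hlε : (l:ℝ) * ε ≤ c := by
    have h1 : ε ≤ c/(l+1) := min_le_right _ _
    have h2 : (l:ℝ) * ε ≤ ((l:ℝ)+1) * ε := by nlinarith [Nat.cast_nonneg (α := ℝ) l]
    have h3 : ((l:ℝ)+1) * ε ≤ ((l:ℝ)+1) * (c/(l+1)) :=
      mul_le_mul_of_nonneg_left h1 (by positivity)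
    have h4 : ((l:ℝ)+1) * (c/(l+1)) = c := by field_simp
    linarith
  rw [Real.norm_eq_abs, Real.norm_eq_abs, abs_of_pos hz0, abs_of_nonpos (by linarith)]
  have hb2 : (1 - (l:ℝ)*ε) * z ≤ (1-ε)^l * z :=
    mul_le_mul_of_nonneg_right hbern hz0.le
  have hcz : (l:ℝ)*ε*z ≤ c*z := mul_le_mul_of_nonneg_right hlε hz0.le
  nlinarith

lemma abs_cos_sub_cos_le (a b : ℝ) : |Real.cos a - Real.cos b| ≤ |a - b| := by
  rw [Real.cos_sub_cos, abs_mul, abs_mul]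
  have h1 : |Real.sin ((a+b)/2)| ≤ 1 := Real.abs_sin_le_one _
  have h2 : |Real.sin ((a-b)/2)| ≤ |(a-b)/2| := Real.abs_sin_le_abs
  have h3 : |(a-b)/2| = |a-b|/2 := by rw [abs_div]; norm_num
  have h4 : |(-2 : ℝ)| = 2 := by norm_num
  rw [h4]
  calc 2 * |Real.sin ((a+b)/2)| * |Real.sin ((a-b)/2)|
      ≤ 2 * 1 * (|a-b|/2) := by
        apply mul_le_mul _ (h3 ▸ h2) (abs_nonneg _) (by norm_num)
        nlinarith [abs_nonneg (Real.sin ((a+b)/2))]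
    _ = |a-b| := by ring

lemma cos_iter_littleo (l : ℕ) :
    (fun θ : ℝ => Real.cos (g^[l] θ) - Real.cos θ)
      =o[nhdsWithin 0 (Set.Ioi 0)] fun θ : ℝ => θ := by
  refine IsBigO.trans_isLittleO (isBigO_of_le _ fun θ => ?_) (g_iter_littleo l)
  simpa using abs_cos_sub_cos_le (g^[l] θ) θ

lemma bdd_mul_littleo {f h : ℝ → ℝ} {C : ℝ}
    (hf : ∀ᶠ θ : ℝ in nhdsWithin 0 (Set.Ioi 0), |f θ| ≤ C)
    (hh : h =o[nhdsWithin 0 (Set.Ioi 0)] fun θ : ℝ => θ) :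
    (fun θ => f θ * h θ) =o[nhdsWithin 0 (Set.Ioi 0)] fun θ : ℝ => θ := by
  have hO : f =O[nhdsWithin 0 (Set.Ioi 0)] (fun _ : ℝ => (1:ℝ)) :=
    IsBigO.of_bound C (by filter_upwards [hf] with θ hθ; simpa using hθ)
  simpa using hO.mul_isLittleO hh

lemma sq_littleo : (fun θ : ℝ => θ * θ) =o[nhdsWithin 0 (Set.Ioi 0)] fun θ : ℝ => θ := by
  have h1 : (fun θ : ℝ => θ) =o[nhdsWithin 0 (Set.Ioi 0)] (fun _ : ℝ => (1:ℝ)) := by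
    rw [isLittleO_one_iff]
    exact Filter.Tendsto.mono_left Filter.tendsto_id nhdsWithin_le_nhds
  simpa using (isBigO_refl (fun θ : ℝ => θ) (nhdsWithin 0 (Set.Ioi 0))).mul_isLittleO h1

lemma prod_factor_bound (t : Finset ℕ) {θ : ℝ} (h0 : 0 < θ) (h1 : θ ≤ 1) :
    0 ≤ (∏ l' ∈ t, (1 - g^[l'] θ / Real.pi)) ∧
      (∏ l' ∈ t, (1 - g^[l'] θ / Real.pi)) ≤ 1 := by
  have hπ := Real.pi_gt_three
  have key : ∀ i : ℕ, 0 ≤ 1 - g^[i] θ / Real.pi ∧ 1 - g^[i] θ / Real.pi ≤ 1 := by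
    intro i
    obtain ⟨hp, hle⟩ := g_iter_pos_le i h0 h1
    have hd0 : 0 ≤ g^[i] θ / Real.pi := div_nonneg hp.le (by linarith)
    have hd1 : g^[i] θ / Real.pi ≤ 1 := (div_le_one (by linarith)).mpr (by linarith)
    exact ⟨by linarith, by linarith⟩
  exact ⟨Finset.prod_nonneg fun i _ => (key i).1,
    Finset.prod_le_one (fun i _ => (key i).1) (fun i _ => (key i).2)⟩

lemma prod_littleo (s : Finset ℕ) :
    (fun θ : ℝ => (∏ l' ∈ s, (1 - g^[l'] θ / Real.pi)) - (1 - (s.card : ℝ) * θ / Real.pi))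
      =o[nhdsWithin 0 (Set.Ioi 0)] fun θ : ℝ => θ := by
  classical
  induction s using Finset.induction_on with
  | empty =>
    simp only [Finset.prod_empty, Finset.card_empty, Nat.cast_zero, zero_mul, zero_div,
      sub_zero, sub_self]
    exact isLittleO_zero _ _
  | @insert a s ha ih =>
    have hπ0 : (0:ℝ) < Real.pi := Real.pi_pos
    have hπ := Real.pi_gt_three
    have t1 : (fun θ : ℝ => (1 - g^[a] θ / Real.pi) *
        ((∏ l' ∈ s, (1 - g^[l'] θ / Real.pi)) - (1 - (s.card : ℝ) * θ / Real.pi)))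
        =o[nhdsWithin 0 (Set.Ioi 0)] fun θ : ℝ => θ := by
      refine bdd_mul_littleo (C := 1) ?_ ih
      filter_upwards [Ioo_mem_nhdsGT (show (0:ℝ) < 1 from one_pos)] with θ hθ
      obtain ⟨hθ0, hθ1⟩ := hθ
      obtain ⟨hp, hle⟩ := g_iter_pos_le a hθ0 hθ1.le
      have hd0 : 0 ≤ g^[a] θ / Real.pi := div_nonneg hp.le (by linarith)
      have hd1 : g^[a] θ / Real.pi ≤ 1 := (div_le_one (by linarith)).mpr (by linarith)
      rw [abs_le]; constructor <;> linarith
    have t2 : (fun θ : ℝ => (θ - g^[a] θ) / Real.pi)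
        =o[nhdsWithin 0 (Set.Ioi 0)] fun θ : ℝ => θ := by
      refine ((g_iter_littleo a).const_mul_left (-(1/Real.pi))).congr_left fun θ => ?_
      ring
    have t3 : (fun θ : ℝ => (s.card : ℝ) * (θ * g^[a] θ) / Real.pi^2)
        =o[nhdsWithin 0 (Set.Ioi 0)] fun θ : ℝ => θ := by
      refine IsBigO.trans_isLittleO (IsBigO.of_bound ((s.card : ℝ)/Real.pi^2) ?_) sq_littleo
      filter_upwards [Ioo_mem_nhdsGT (show (0:ℝ) < 1 from one_pos)] with θ hθ
      obtain ⟨hp, hle⟩ := g_iter_pos_le a hθ.1 hθ.2.le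
      have h0 : (0:ℝ) < θ := hθ.1
      rw [Real.norm_eq_abs, Real.norm_eq_abs,
        abs_of_nonneg (by positivity : (0:ℝ) ≤ (s.card : ℝ) * (θ * g^[a] θ) / Real.pi^2),
        abs_of_nonneg (by positivity : (0:ℝ) ≤ θ * θ)]
      rw [div_mul_eq_mul_div, div_le_div_iff₀ (by positivity) (by positivity)]
      have : (s.card : ℝ) * (θ * g^[a] θ) ≤ (s.card : ℝ) * (θ * θ) := by
        have := mul_le_mul_of_nonneg_left hle h0.le
        have := mul_le_mul_of_nonneg_left this (Nat.cast_nonneg (α := ℝ) s.card)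
        linarith
      nlinarith [sq_nonneg Real.pi, Real.pi_pos]
    have heq : (fun θ : ℝ => (∏ l' ∈ insert a s, (1 - g^[l'] θ / Real.pi))
        - (1 - ((insert a s).card : ℝ) * θ / Real.pi))
        = fun θ : ℝ => (1 - g^[a] θ / Real.pi) *
            ((∏ l' ∈ s, (1 - g^[l'] θ / Real.pi)) - (1 - (s.card : ℝ) * θ / Real.pi))
          + ((θ - g^[a] θ) / Real.pi + (s.card : ℝ) * (θ * g^[a] θ) / Real.pi^2) := by
      funext θ
      rw [Finset.prod_insert ha, Finset.card_insert_of_notMem ha]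
      push_cast
      field_simp
      ring
    rw [heq]
    exact t1.add (t2.add t3)
noncomputable def Dterm (L l : ℕ) (θ : ℝ) : ℝ :=
  Real.cos (g^[l] θ) * ∏ l' ∈ Finset.Ico l L, (1 - g^[l'] θ / Real.pi)
    - (1 - ((Finset.Ico l L).card : ℝ) * θ / Real.pi) * Real.cos θ

lemma Dterm_littleo (L l : ℕ) :
    Dterm L l =o[nhdsWithin 0 (Set.Ioi 0)] fun θ : ℝ => θ := by
  have t1 : (fun θ : ℝ => (∏ l' ∈ Finset.Ico l L, (1 - g^[l'] θ / Real.pi)) *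
      (Real.cos (g^[l] θ) - Real.cos θ)) =o[nhdsWithin 0 (Set.Ioi 0)] fun θ : ℝ => θ := by
    refine bdd_mul_littleo (C := 1) ?_ (cos_iter_littleo l)
    filter_upwards [Ioo_mem_nhdsGT (show (0:ℝ) < 1 from one_pos)] with θ hθ
    obtain ⟨h0, h1⟩ := prod_factor_bound (Finset.Ico l L) hθ.1 hθ.2.le
    rw [abs_le]; constructor <;> linarith
  have t2 : (fun θ : ℝ => Real.cos θ *
      ((∏ l' ∈ Finset.Ico l L, (1 - g^[l'] θ / Real.pi))
        - (1 - ((Finset.Ico l L).card : ℝ) * θ / Real.pi)))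
      =o[nhdsWithin 0 (Set.Ioi 0)] fun θ : ℝ => θ :=
    bdd_mul_littleo (C := 1)
      (Filter.Eventually.of_forall fun θ => Real.abs_cos_le_one θ)
      (prod_littleo (Finset.Ico l L))
  refine (t1.add t2).congr_left fun θ => ?_
  unfold Dterm
  ring

/-- Theorem 4.4 of the paper, the better-separation expansion.
For every fixed `L`, as `θ → 0⁺`, `F L θ = (1 − (L/(2π)) θ + o(θ)) cos θ`; i.e. the
function `θ ↦ F L θ − (1 − (L/(2π)) θ) cos θ` is `o(θ)` as `θ → 0` from the right. -/
theorem F_asymptotic_expansion (L : ℕ) :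
    (fun θ : ℝ => F L θ - (1 - (L : ℝ) / (2 * Real.pi) * θ) * Real.cos θ)
      =o[nhdsWithin 0 (Set.Ioi 0)] fun θ : ℝ => θ := by
  have hπ0 : (0:ℝ) < Real.pi := Real.pi_pos
  have hL1 : ((L:ℝ) + 1) ≠ 0 := by positivity
  have hsum : (fun θ : ℝ => ∑ l ∈ Finset.range (L+1), Dterm L l θ)
      =o[nhdsWithin 0 (Set.Ioi 0)] fun θ : ℝ => θ :=
    IsLittleO.fun_sum fun l _ => Dterm_littleo L l
  refine (hsum.const_mul_left (1 / ((L:ℝ) + 1))).congr_left fun θ => ?_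
  have hcard : ∀ l ∈ Finset.range (L+1),
      (1 - ((Finset.Ico l L).card : ℝ) * θ / Real.pi) * Real.cos θ
        = (1 - ((L:ℝ) - (l:ℝ)) * θ / Real.pi) * Real.cos θ := by
    intro l hl
    rw [Nat.card_Ico, Nat.cast_sub (Nat.lt_succ_iff.mp (Finset.mem_range.mp hl))]
  have hgauss : (∑ l ∈ Finset.range (L+1), (l:ℝ)) = (L:ℝ) * ((L:ℝ)+1) / 2 := by
    have h : (∑ l ∈ Finset.range (L+1), l) * 2 = (L+1) * L := by
      simpa using Finset.sum_range_id_mul_two (L+1)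
    have h2 : ((∑ l ∈ Finset.range (L+1), l : ℕ) : ℝ) * 2 = ((L:ℝ)+1) * L := by
      exact_mod_cast congrArg (fun n : ℕ => (n:ℝ)) h
    rw [Nat.cast_sum] at h2
    linarith
  have hkey : ∑ l ∈ Finset.range (L+1), Dterm L l θ
      = (∑ l ∈ Finset.range (L+1),
          Real.cos (g^[l] θ) * ∏ l' ∈ Finset.Ico l L, (1 - g^[l'] θ / Real.pi))
        - (((L:ℝ)+1) - ((L:ℝ) * ((L:ℝ)+1) / 2) * θ / Real.pi) * Real.cos θ := by
    unfold Dterm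
    rw [Finset.sum_sub_distrib]
    congr 1
    rw [Finset.sum_congr rfl hcard, ← Finset.sum_mul]
    congr 1
    have hterm : ∀ l : ℕ, (1 - ((L:ℝ) - (l:ℝ)) * θ / Real.pi)
        = 1 - (L:ℝ) * (θ / Real.pi) + (l:ℝ) * (θ / Real.pi) := fun l => by ring
    simp_rw [hterm]
    have h1 : (∑ _l ∈ Finset.range (L+1), ((L:ℝ) * (θ/Real.pi)))
        = ((L:ℝ)+1) * ((L:ℝ)*(θ/Real.pi)) := by
      rw [Finset.sum_const, Finset.card_range]; push_cast; ring
    have h2 : (∑ l ∈ Finset.range (L+1), ((l:ℝ) * (θ/Real.pi)))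
        = ((L:ℝ)*((L:ℝ)+1)/2) * (θ/Real.pi) := by
      rw [← Finset.sum_mul, hgauss]
    rw [Finset.sum_add_distrib, Finset.sum_sub_distrib, h1, h2, Finset.sum_const,
      Finset.card_range]
    push_cast
    ring
  rw [F, hkey]
  field_simp
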